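/- Let p be a prime, let M be a uniformly random n × n symmetric matrix with entries in {-1, 1} (entries reduced mod p), let v ∈ (ℤ/pℤ)^n, let w ∈ (ℤ/pℤ)^n, and let T' ⊆ S ⊆ [n]. Then P(M·v = w) ≤ ρ(v_{T'})^{|S| - |T'|} · ρ(v_S)^{n - |S|}, where the matrix-vector product is over ℤ/pℤ. -/
import Mathlib


/-- `probX μ v x` is the probability that the random walk `X_μ(v) = ε₁v₁ + ⋯ + εₙvₙ`
(valued in `ℤ/pℤ`) equals `x`, where `ε₁,…,εₙ` are i.i.d. with
`P(εᵢ = 1) = P(εᵢ = -1) = μ/2` and `P(εᵢ = 0) = 1 - μ`. -/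
noncomputable def probX {p : ℕ} [NeZero p] {ι : Type} [Fintype ι] [DecidableEq ι]
    (μ : ℝ) (v : ι → ZMod p) (x : ZMod p) : ℝ :=
  ∑ ε : ι → ({-1, 0, 1} : Finset ℤ),
    (∏ i, if (ε i : ℤ) = 0 then 1 - μ else μ / 2) *
      (if (∑ i, ((ε i : ℤ) : ZMod p) * v i) = x then 1 else 0)

/-- `rho μ v = max_x P(X_μ(v) = x)`, the largest atom of the random walk `X_μ(v)`. -/
noncomputable def rho {p : ℕ} [NeZero p] {ι : Type} [Fintype ι] [DecidableEq ι]
    (μ : ℝ) (v : ι → ZMod p) : ℝ :=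
  ⨆ x : ZMod p, probX μ v x
/-- `symPr n E` is the probability that a uniformly random `n × n` symmetric matrix
with entries in `{-1, 1}` lies in the event `E`. -/
noncomputable def symPr (n : ℕ) (E : Set (Matrix (Fin n) (Fin n) ℤ)) : ℝ :=
  (Nat.card {A : Matrix (Fin n) (Fin n) ℤ |
      (A.IsSymm ∧ ∀ i j, A i j = 1 ∨ A i j = -1) ∧ A ∈ E} : ℝ) /
  (Nat.card {A : Matrix (Fin n) (Fin n) ℤ |
      A.IsSymm ∧ ∀ i j, A i j = 1 ∨ A i j = -1} : ℝ)

open Finset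
open scoped Classical

/-- instance-free real indicator -/
noncomputable def ind (P : Prop) : ℝ := if P then 1 else 0

lemma ind_congr {P Q : Prop} (h : P ↔ Q) : ind P = ind Q := by
  unfold ind; exact if_congr h rfl rfl

lemma ind_pos {P : Prop} (h : P) : ind P = 1 := by unfold ind; exact if_pos h

lemma ind_neg {P : Prop} (h : ¬ P) : ind P = 0 := by unfold ind; exact if_neg h

lemma ind_nonneg {P : Prop} : 0 ≤ ind P := by unfold ind; split <;> norm_num

lemma ind_and_le_left {P Q : Prop} : ind (P ∧ Q) ≤ ind P := by
  unfold ind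
  split <;> rename_i h
  · rw [if_pos h.1]
  · split <;> norm_num

lemma ite_irrel {P : Prop} (i1 i2 : Decidable P) (a b : ℝ) :
    @ite ℝ P i1 a b = @ite ℝ P i2 a b := by
  rw [Subsingleton.elim i1 i2]

lemma ind_mono {P Q : Prop} (h : P → Q) : ind P ≤ ind Q := by
  unfold ind
  split <;> rename_i hp
  · rw [if_pos (h hp)]
  · split <;> norm_num

/-! ### basic setup -/

def sgn (b : Bool) : ℤ := if b then 1 else -1

lemma sgn_ne_zero (b : Bool) : sgn b ≠ 0 := by cases b <;> simp [sgn]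

lemma sgn_mem (b : Bool) : sgn b ∈ ({-1, 0, 1} : Finset ℤ) := by cases b <;> simp [sgn]

lemma sgn_decide (z : ℤ) (h : z = 1 ∨ z = -1) : sgn (decide (z = 1)) = z := by
  rcases h with h | h <;> simp [h, sgn]

def mat (n : ℕ) (g : Fin n × Fin n → Bool) : Matrix (Fin n) (Fin n) ℤ :=
  fun i j => if i ≤ j then sgn (g (i, j)) else sgn (g (j, i))

lemma mat_isSymm (n : ℕ) (g : Fin n × Fin n → Bool) : (mat n g).IsSymm := by
  ext i j
  unfold mat Matrix.transpose
  rcases le_total i j with h | h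
  · rcases eq_or_lt_of_le h with rfl | h'
    · simp
    · simp only [Matrix.of_apply]
      rw [if_pos h, if_neg (not_le.2 h')]
  · rcases eq_or_lt_of_le h with rfl | h'
    · simp
    · simp only [Matrix.of_apply]
      rw [if_neg (not_le.2 h'), if_pos h]

lemma mat_pm (n : ℕ) (g : Fin n × Fin n → Bool) : ∀ i j, mat n g i j = 1 ∨ mat n g i j = -1 := by
  intro i j
  unfold mat
  split <;> rename_i h <;> [cases g (i,j); cases g (j,i)] <;> simp [sgn]

/-- the symmetric ±1 matrices as a subtype -/
def SymPM (n : ℕ) : Type :=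
  {A : Matrix (Fin n) (Fin n) ℤ // A.IsSymm ∧ ∀ i j, A i j = 1 ∨ A i j = -1}

/-- the global parametrization equivalence -/
def Phi (n : ℕ) : (Fin n × Fin n → Bool) ≃ SymPM n × ({q : Fin n × Fin n // ¬ q.1 ≤ q.2} → Bool) where
  toFun g := (⟨mat n g, mat_isSymm n g, mat_pm n g⟩, fun q => g q.1)
  invFun x := fun q => if h : q.1 ≤ q.2 then decide (x.1.1 q.1 q.2 = 1) else x.2 ⟨q, h⟩
  left_inv g := by
    funext q
    by_cases h : q.1 ≤ q.2
    · simp only [dif_pos h]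
      have : mat n g q.1 q.2 = sgn (g q) := by simp [mat, h]
      simp only [this]
      cases hb : g q <;> simp [sgn]
    · simp [dif_neg h]
  right_inv := by
    rintro ⟨⟨A, hs, hpm⟩, l⟩
    refine Prod.ext ?_ ?_
    · apply Subtype.ext
      show mat n (fun q => if h : q.1 ≤ q.2 then decide (A q.1 q.2 = 1) else l ⟨q, h⟩) = A
      ext i j
      unfold mat
      by_cases h : i ≤ j
      · rw [if_pos h]
        simp only [dif_pos h]
        exact sgn_decide _ (hpm i j)
      · rw [if_neg h]
        have h' : j ≤ i := le_of_not_ge h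
        simp only [dif_pos h']
        rw [sgn_decide _ (hpm j i)]
        have := congrFun (congrFun hs.symm j) i
        simpa [Matrix.transpose] using this
    · funext q
      simp [dif_neg q.2]

/-- symPr as normalized counting over the parametrization -/
lemma symPr_eq (n : ℕ) (E : Set (Matrix (Fin n) (Fin n) ℤ)) :
    symPr n E = (∑ g : Fin n × Fin n → Bool,
      ind (mat n g ∈ E)) / 2 ^ (n * n) := by
  classical
  set L := Nat.card ({q : Fin n × Fin n // ¬ q.1 ≤ q.2} → Bool) with hLdef
  have hLne : (L : ℝ) ≠ 0 := by
    have : 0 < L := Nat.card_pos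
    exact_mod_cast this.ne'
  have eq1 : {x : SymPM n // x.1 ∈ E} ≃
      {A : Matrix (Fin n) (Fin n) ℤ //
        (A.IsSymm ∧ ∀ i j, A i j = 1 ∨ A i j = -1) ∧ A ∈ E} :=
    Equiv.subtypeSubtypeEquivSubtypeInter _ _
  have eq2 : {g : Fin n × Fin n → Bool // mat n g ∈ E}
      ≃ {x : SymPM n // x.1 ∈ E} × ({q : Fin n × Fin n // ¬ q.1 ≤ q.2} → Bool) :=
    (Equiv.subtypeEquiv (p := fun g => mat n g ∈ E)
        (q := fun y : SymPM n × ({q : Fin n × Fin n // ¬ q.1 ≤ q.2} → Bool) => y.1.1 ∈ E)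
        (Phi n) (fun g => Iff.rfl)).trans
      (Equiv.prodSubtypeFstEquivSubtypeProd (p := fun x : SymPM n => x.1 ∈ E))
  have hcnt : (∑ g : Fin n × Fin n → Bool, ind (mat n g ∈ E))
      = (Nat.card {g : Fin n × Fin n → Bool // mat n g ∈ E} : ℝ) := by
    unfold ind
    rw [Finset.sum_boole, Nat.card_eq_fintype_card, Fintype.card_subtype]
  have hN : Nat.card {g : Fin n × Fin n → Bool // mat n g ∈ E}
      = Nat.card {A : Matrix (Fin n) (Fin n) ℤ |
          (A.IsSymm ∧ ∀ i j, A i j = 1 ∨ A i j = -1) ∧ A ∈ E} * L := by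
    rw [Nat.card_congr eq2, Nat.card_prod, Nat.card_congr eq1]
    rfl
  have hD : 2 ^ (n * n) = Nat.card {A : Matrix (Fin n) (Fin n) ℤ |
      A.IsSymm ∧ ∀ i j, A i j = 1 ∨ A i j = -1} * L := by
    have h := Nat.card_congr (Phi n)
    rw [Nat.card_prod] at h
    have hc : Nat.card (Fin n × Fin n → Bool) = 2 ^ (n * n) := by
      rw [Nat.card_eq_fintype_card]
      simp [Fintype.card_fun]
    rw [← hc, h]
    rfl
  rw [symPr, hcnt, hN]
  have h2 : ((2 : ℝ)) ^ (n * n) = ((Nat.card {A : Matrix (Fin n) (Fin n) ℤ |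
      A.IsSymm ∧ ∀ i j, A i j = 1 ∨ A i j = -1} * L : ℕ) : ℝ) := by
    exact_mod_cast congrArg (Nat.cast : ℕ → ℝ) hD
  rw [h2]
  push_cast
  rw [mul_div_mul_right _ _ hLne]

/-! ### probX at μ = 1 -/

lemma probX_one {p : ℕ} [NeZero p] {ι : Type} [Fintype ι] [DecidableEq ι]
    (v : ι → ZMod p) (x : ZMod p) :
    probX 1 v x * 2 ^ (Fintype.card ι) =
      ∑ b : ι → Bool, ind ((∑ i, ((sgn (b i) : ℤ) : ZMod p) * v i) = x) := by
  classical
  have pm : ∀ (ε : ι → ({-1, 0, 1} : Finset ℤ)) (i : ι), (ε i : ℤ) ≠ 0 →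
      (ε i : ℤ) = 1 ∨ (ε i : ℤ) = -1 := by
    intro ε i hne
    have := (ε i).2
    simp only [Finset.mem_insert, Finset.mem_singleton] at this
    rcases this with h | h | h
    · exact Or.inr h
    · exact absurd h hne
    · exact Or.inl h
  have h0 : probX 1 v x =
      ∑ ε ∈ Finset.univ.filter (fun ε : ι → ({-1, 0, 1} : Finset ℤ) => ∀ i, (ε i : ℤ) ≠ 0),
        (∏ i, if (ε i : ℤ) = 0 then (1:ℝ) - 1 else 1 / 2) *
          (if (∑ i, ((ε i : ℤ) : ZMod p) * v i) = x then 1 else 0) := by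
    rw [probX]
    refine (Finset.sum_subset (Finset.filter_subset _ _) ?_).symm
    intro ε _ hε
    simp only [Finset.mem_filter, Finset.mem_univ, true_and, not_forall, not_not] at hε
    obtain ⟨i, hi⟩ := hε
    rw [Finset.prod_eq_zero (Finset.mem_univ i) (by rw [if_pos hi]; ring), zero_mul]
  have h1 : probX 1 v x = (1/2 : ℝ) ^ (Fintype.card ι) *
      ∑ ε ∈ Finset.univ.filter (fun ε : ι → ({-1, 0, 1} : Finset ℤ) => ∀ i, (ε i : ℤ) ≠ 0),
        (if (∑ i, ((ε i : ℤ) : ZMod p) * v i) = x then (1:ℝ) else 0) := by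
    rw [h0, Finset.mul_sum]
    refine Finset.sum_congr rfl fun ε hε => ?_
    simp only [Finset.mem_filter, Finset.mem_univ, true_and] at hε
    have : (∏ i, if (ε i : ℤ) = 0 then (1:ℝ) - 1 else 1 / 2) = (1/2 : ℝ) ^ (Fintype.card ι) := by
      rw [Finset.prod_congr rfl (fun i _ => if_neg (hε i)), Finset.prod_const,
        Finset.card_univ]
    rw [this]
  have h2 : (∑ ε ∈ Finset.univ.filter
        (fun ε : ι → ({-1, 0, 1} : Finset ℤ) => ∀ i, (ε i : ℤ) ≠ 0),
        (if (∑ i, ((ε i : ℤ) : ZMod p) * v i) = x then (1:ℝ) else 0)) =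
      ∑ b : ι → Bool, ind ((∑ i, ((sgn (b i) : ℤ) : ZMod p) * v i) = x) := by
    refine Finset.sum_nbij' (fun ε => fun k => decide ((ε k : ℤ) = 1))
      (fun b => fun k => ⟨sgn (b k), sgn_mem _⟩) ?_ ?_ ?_ ?_ ?_
    · intro ε _; exact Finset.mem_univ _
    · intro b _
      simp only [Finset.mem_filter, Finset.mem_univ, true_and]
      intro i; exact sgn_ne_zero _
    · intro ε hε
      simp only [Finset.mem_filter, Finset.mem_univ, true_and] at hε
      funext k
      exact Subtype.ext (sgn_decide _ (pm ε k (hε k)))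
    · intro b _
      funext k
      cases hb : b k <;> simp [sgn, hb]
    · intro ε hε
      simp only [Finset.mem_filter, Finset.mem_univ, true_and] at hε
      have hconv : (if (∑ i, ((ε i : ℤ) : ZMod p) * v i) = x then (1:ℝ) else 0)
          = ind ((∑ i, ((ε i : ℤ) : ZMod p) * v i) = x) := by
        unfold ind
        exact ite_irrel _ _ _ _
      rw [hconv]
      refine ind_congr ?_
      constructor <;> intro h <;> rw [← h] <;> refine Finset.sum_congr rfl fun i _ => ?_ <;>
        rw [sgn_decide _ (pm ε i (hε i))]
  rw [h1, h2]
  rw [mul_comm ((1/2 : ℝ) ^ (Fintype.card ι)), mul_assoc]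
  rw [div_pow, one_pow, one_div, inv_mul_cancel₀ (by positivity), mul_one]

lemma probX_nonneg {p : ℕ} [NeZero p] {ι : Type} [Fintype ι] [DecidableEq ι]
    (v : ι → ZMod p) (x : ZMod p) : 0 ≤ probX 1 v x := by
  apply Finset.sum_nonneg
  intro ε _
  apply mul_nonneg
  · apply Finset.prod_nonneg
    intro i _
    split <;> norm_num
  · split <;> norm_num

lemma rho_nonneg {p : ℕ} [NeZero p] {ι : Type} [Fintype ι] [DecidableEq ι]
    (v : ι → ZMod p) : 0 ≤ rho 1 v := by
  have : Nonempty (ZMod p) := ⟨0⟩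
  obtain ⟨x⟩ := this
  exact le_trans (probX_nonneg v x) (le_ciSup (Set.Finite.bddAbove (Set.finite_range _)) x)

lemma probX_le_rho {p : ℕ} [NeZero p] {ι : Type} [Fintype ι] [DecidableEq ι]
    (v : ι → ZMod p) (x : ZMod p) : probX 1 v x ≤ rho 1 v :=
  le_ciSup (Set.Finite.bddAbove (Set.finite_range _)) x

/-! ### peeling -/

def overwrite {K : Type} [DecidableEq K] (g : K → Bool) (B : Finset K) (h : B → Bool) :
    K → Bool := fun k => if hk : k ∈ B then h ⟨k, hk⟩ else g k

lemma peel {K : Type} [Fintype K] [DecidableEq K] (B : Finset K)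
    (E F : (K → Bool) → Prop) (c : ℝ) (hc : 0 ≤ c)
    (hF : ∀ g g', (∀ k ∉ B, g k = g' k) → F g → F g')
    (hE : ∀ g : K → Bool,
      (∑ h : B → Bool, ind (E (overwrite g B h))) ≤ c * 2 ^ B.card) :
    (∑ g : K → Bool, ind (E g ∧ F g)) ≤ c * ∑ g : K → Bool, ind (F g) := by
  classical
  set e := (Equiv.piEquivPiSubtypeProd (fun k : K => k ∈ B) (fun _ => Bool)) with he
  have hcomb : ∀ (h : {k // k ∈ B} → Bool) (t : {k // ¬ k ∈ B} → Bool),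
      e.symm (h, t) = overwrite (e.symm (fun _ => false, t)) B h := by
    intro h t; funext k
    by_cases hk : k ∈ B <;> simp [he, overwrite, hk]
  have hFiff : ∀ (h h' : {k // k ∈ B} → Bool) (t : {k // ¬ k ∈ B} → Bool),
      F (e.symm (h, t)) → F (e.symm (h', t)) := by
    intro h h' t hf
    refine hF _ _ (fun k hk => ?_) hf
    simp [he, dif_neg hk]
  have hcard : (∑ _h : {k // k ∈ B} → Bool, (1:ℝ)) = 2 ^ B.card := by
    rw [Finset.sum_const, Finset.card_univ]
    simp [Fintype.card_fun]
  have expand : ∀ (G : (K → Bool) → Prop),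
      (∑ g : K → Bool, ind (G g))
        = ∑ t : {k // ¬ k ∈ B} → Bool, ∑ h : {k // k ∈ B} → Bool,
            ind (G (e.symm (h, t))) := by
    intro G
    rw [← Equiv.sum_comp e.symm (fun g => ind (G g)), Fintype.sum_prod_type]
    exact Finset.sum_comm
  rw [expand (fun g => E g ∧ F g), expand F, Finset.mul_sum]
  refine Finset.sum_le_sum (fun (t : {k // ¬ k ∈ B} → Bool) _ => ?_)
  by_cases hFt : F (e.symm (fun _ => false, t))
  · have hFall : ∀ h, F (e.symm (h, t)) := fun h => hFiff _ h t hFt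
    have step1 : (∑ h : {k // k ∈ B} → Bool, ind (E (e.symm (h, t)) ∧ F (e.symm (h, t))))
        ≤ ∑ h : {k // k ∈ B} → Bool, ind (E (e.symm (h, t))) :=
      Finset.sum_le_sum fun h _ => ind_and_le_left
    refine le_trans step1 ?_
    have step2 : (∑ h : {k // k ∈ B} → Bool, ind (E (e.symm (h, t))))
        ≤ c * 2 ^ B.card := by
      refine le_trans (le_of_eq ?_) (hE (e.symm (fun _ => false, t)))
      exact Finset.sum_congr rfl fun h _ => by rw [hcomb]
    refine le_trans step2 (le_of_eq ?_)
    rw [show (∑ h : {k // k ∈ B} → Bool, ind (F (e.symm (h, t))))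
        = ∑ _h : {k // k ∈ B} → Bool, (1:ℝ) from
      Finset.sum_congr rfl fun h _ => ind_pos (hFall h), hcard]
  · have hFnone : ∀ h, ¬ F (e.symm (h, t)) := fun h hf => hFt (hFiff h _ t hf)
    have l0 : (∑ h : {k // k ∈ B} → Bool, ind (E (e.symm (h, t)) ∧ F (e.symm (h, t)))) = 0 :=
      Finset.sum_eq_zero fun h _ => ind_neg (fun hc' => hFnone h hc'.2)
    have r0 : (∑ h : {k // k ∈ B} → Bool, ind (F (e.symm (h, t)))) = 0 :=
      Finset.sum_eq_zero fun h _ => ind_neg (hFnone h)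
    rw [l0, r0, mul_zero]

/-! ### sorted pairs and row events -/

def srt {n : ℕ} (r k : Fin n) : Fin n × Fin n := if r ≤ k then (r, k) else (k, r)

lemma srt_eq {n : ℕ} {a b c d : Fin n} (h : srt a b = srt c d) :
    (a = c ∧ b = d) ∨ (a = d ∧ b = c) := by
  unfold srt at h
  split at h <;> split at h <;> simp [Prod.ext_iff] at h <;> tauto

lemma mat_srt {n : ℕ} (g : Fin n × Fin n → Bool) (r j : Fin n) :
    mat n g r j = sgn (g (srt r j)) := by
  unfold mat srt
  split <;> rfl

lemma srt_mem_image {n : ℕ} {U : Finset (Fin n)} {r : Fin n} (hr : r ∉ U) (j : Fin n) :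
    srt r j ∈ U.image (srt r) ↔ j ∈ U := by
  constructor
  · intro h
    obtain ⟨k, hk, hkj⟩ := Finset.mem_image.1 h
    rcases srt_eq hkj with ⟨_, h2⟩ | ⟨h1, h2⟩
    · exact h2 ▸ hk
    · exact absurd (by rwa [h2] at hk) hr
  · exact fun h => Finset.mem_image_of_mem _ h

lemma srt_notMem_image {n : ℕ} {U : Finset (Fin n)} {r r' : Fin n}
    (hne : r' ≠ r) (hr' : r' ∉ U) (j : Fin n) :
    srt r' j ∉ U.image (srt r) := by
  intro h
  obtain ⟨k, hk, hkj⟩ := Finset.mem_image.1 h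
  rcases srt_eq hkj with ⟨h1, _⟩ | ⟨h1, h2⟩
  · exact hne h1.symm
  · exact hr' (h2 ▸ hk)

section Main

variable (p : ℕ) [Fact p.Prime] (n : ℕ) (v w : Fin n → ZMod p)

/-- row event: row `r` of `M v = w` -/
def Ev (g : Fin n × Fin n → Bool) (r : Fin n) : Prop :=
  (∑ j, ((mat n g r j : ℤ) : ZMod p) * v j) = w r

lemma Ev_congr {g g' : Fin n × Fin n → Bool} {r : Fin n}
    (h : ∀ j, g (srt r j) = g' (srt r j)) : Ev p n v w g r ↔ Ev p n v w g' r := by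
  unfold Ev
  refine Eq.congr ?_ rfl
  refine Finset.sum_congr rfl fun j _ => ?_
  rw [mat_srt, mat_srt, h j]

lemma block_bound (U : Finset (Fin n)) (r : Fin n) (hr : r ∉ U)
    (g : Fin n × Fin n → Bool) :
    (∑ h : ((U.image (srt r)) : Finset (Fin n × Fin n)) → Bool,
        ind (Ev p n v w (overwrite g (U.image (srt r)) h) r))
      ≤ rho 1 (fun i : U => v i.1) * 2 ^ (U.image (srt r)).card := by
  classical
  set B := U.image (srt r) with hB
  have hinj : Set.InjOn (srt r) U := by
    intro k hk k' hk' hkk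
    rcases srt_eq hkk with ⟨_, h2⟩ | ⟨h1, h2⟩
    · exact h2
    · exact absurd (h2.symm ▸ hk) hr
  have hBcard : B.card = U.card := Finset.card_image_of_injOn hinj
  -- the equivalence between U and B
  have hsurj : ∀ y : {x // x ∈ B}, ∃ k : {k // k ∈ U}, srt r k.1 = y.1 := by
    rintro ⟨y, hy⟩
    obtain ⟨k, hk, hky⟩ := Finset.mem_image.1 hy
    exact ⟨⟨k, hk⟩, hky⟩
  let e : {k // k ∈ U} ≃ {x // x ∈ B} :=
    Equiv.ofBijective (fun k => ⟨srt r k.1, Finset.mem_image_of_mem _ k.2⟩)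
      ⟨by
        intro k k' hkk
        simp only [Subtype.mk.injEq] at hkk
        exact Subtype.ext (hinj k.2 k'.2 hkk),
       by
        intro y
        obtain ⟨k, hk⟩ := hsurj y
        exact ⟨k, Subtype.ext hk⟩⟩
  -- constant part
  set C : ZMod p := ∑ j ∈ Finset.univ \ U, ((mat n g r j : ℤ) : ZMod p) * v j with hC
  -- rewrite the event
  have hEv : ∀ h : {x // x ∈ B} → Bool,
      Ev p n v w (overwrite g B h) r ↔
        (∑ i : {k // k ∈ U}, ((sgn (h (e i)) : ℤ) : ZMod p) * v i.1) = w r - C := by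
    intro h
    unfold Ev
    rw [← Finset.sum_sdiff (Finset.subset_univ U)
      (f := fun j => ((mat n (overwrite g B h) r j : ℤ) : ZMod p) * v j)]
    have hout : (∑ j ∈ Finset.univ \ U,
        ((mat n (overwrite g B h) r j : ℤ) : ZMod p) * v j) = C := by
      rw [hC]
      refine Finset.sum_congr rfl fun j hj => ?_
      have hjU : j ∉ U := (Finset.mem_sdiff.1 hj).2
      congr 2
      rw [mat_srt, mat_srt]
      unfold overwrite
      rw [dif_neg (fun hmem => hjU ((srt_mem_image hr j).1 hmem))]
    have hin : (∑ j ∈ U, ((mat n (overwrite g B h) r j : ℤ) : ZMod p) * v j)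
        = ∑ i : {k // k ∈ U}, ((sgn (h (e i)) : ℤ) : ZMod p) * v i.1 := by
      rw [← Finset.sum_coe_sort U
        (fun j => ((mat n (overwrite g B h) r j : ℤ) : ZMod p) * v j)]
      refine Finset.sum_congr rfl fun i _ => ?_
      congr 2
      rw [mat_srt]
      unfold overwrite
      rw [dif_pos ((srt_mem_image hr i.1).2 i.2)]
      rfl
    rw [hout, hin]
    constructor
    · intro hh
      rw [eq_sub_iff_add_eq, add_comm]
      exact hh
    · intro hh
      rw [eq_sub_iff_add_eq, add_comm] at hh
      exact hh
  -- reindex the sum over h by ε : U → Bool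
  have reindex : (∑ h : {x // x ∈ B} → Bool,
        ind (Ev p n v w (overwrite g B h) r))
      = ∑ ε : {k // k ∈ U} → Bool,
          ind ((∑ i : {k // k ∈ U}, ((sgn (ε i) : ℤ) : ZMod p) * v i.1) = w r - C) := by
    rw [← Equiv.sum_comp (Equiv.arrowCongr e (Equiv.refl Bool))
      (fun h : {x // x ∈ B} → Bool =>
        ind (Ev p n v w (overwrite g B h) r))]
    refine Finset.sum_congr rfl fun ε _ => ?_
    rw [ind_congr (hEv _)]
    refine ind_congr (Eq.congr (Finset.sum_congr rfl fun i _ => ?_) rfl)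
    congr 3
    simp [Equiv.arrowCongr]
  rw [reindex]
  have := probX_one (fun i : U => v i.1) (w r - C)
  rw [Fintype.card_coe] at this
  rw [← this, hBcard]
  exact mul_le_mul_of_nonneg_right (probX_le_rho _ _) (by positivity)

lemma main_count (T' S : Finset (Fin n)) (R : Finset (Fin n))
    (hR : ∀ r ∈ R, r ∉ T') :
    (∑ g : Fin n × Fin n → Bool, ind (∀ r ∈ R, Ev p n v w g r))
      ≤ (∏ r ∈ R, if r ∈ S then rho 1 (fun i : T' => v i.1)
            else rho 1 (fun i : S => v i.1)) * 2 ^ (n * n) := by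
  classical
  revert hR
  induction R using Finset.strongInduction with
  | _ R ih =>
    intro hR
    rcases Finset.eq_empty_or_nonempty R with rfl | hRne
    · have hall : (∑ g : Fin n × Fin n → Bool,
          ind (∀ r ∈ (∅ : Finset (Fin n)), Ev p n v w g r))
          = 2 ^ (n * n) := by
        rw [Finset.sum_congr rfl (fun g _ => ind_pos (by simp)), Finset.sum_const,
          Finset.card_univ]
        simp [Fintype.card_fun]
      rw [hall, Finset.prod_empty, one_mul]
    · have key : ∀ (U : Finset (Fin n)) (r : Fin n), r ∈ R → r ∉ U →
          (∀ r' ∈ R.erase r, r' ∉ U) →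
          (∑ g : Fin n × Fin n → Bool,
              ind (∀ r'' ∈ R, Ev p n v w g r''))
            ≤ rho 1 (fun i : U => v i.1) *
              ∑ g : Fin n × Fin n → Bool,
                ind (∀ r' ∈ R.erase r, Ev p n v w g r') := by
        intro U r hrR hrU herase
        have hiff : ∀ g, (∀ r'' ∈ R, Ev p n v w g r'') ↔
            (Ev p n v w g r ∧ ∀ r' ∈ R.erase r, Ev p n v w g r') := by
          intro g
          constructor
          · intro hall
            exact ⟨hall r hrR, fun r' hr' => hall r' (Finset.mem_of_mem_erase hr')⟩
          · rintro ⟨h1, h2⟩ r'' hr''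
            by_cases hr''r : r'' = r
            · exact hr''r ▸ h1
            · exact h2 r'' (Finset.mem_erase.2 ⟨hr''r, hr''⟩)
        rw [Finset.sum_congr rfl (fun g _ => ind_congr (hiff g))]
        refine peel (U.image (srt r)) (fun g => Ev p n v w g r)
          (fun g => ∀ r' ∈ R.erase r, Ev p n v w g r')
          (rho 1 (fun i : U => v i.1)) (rho_nonneg _) ?_ ?_
        · intro g g' hagree hF' r' hr'
          have hne : r' ≠ r := (Finset.mem_erase.1 hr').1
          refine (Ev_congr p n v w (fun j => ?_)).1 (hF' r' hr')
          exact hagree _ (srt_notMem_image hne (herase r' hr') j)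
        · intro g
          exact block_bound p n v w U r hrU g
      by_cases hcase : ∃ r ∈ R, r ∈ S
      · obtain ⟨r, hrR, hrS⟩ := hcase
        have h1 := key T' r hrR (hR r hrR)
          (fun r' hr' => hR r' (Finset.mem_of_mem_erase hr'))
        have h2 := ih (R.erase r) (Finset.erase_ssubset hrR)
          (fun r' hr' => hR r' (Finset.mem_of_mem_erase hr'))
        refine le_trans h1 (le_trans
          (mul_le_mul_of_nonneg_left h2 (rho_nonneg _)) (le_of_eq ?_))
        rw [← mul_assoc, ← Finset.mul_prod_erase _ _ hrR, if_pos hrS]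
      · push_neg at hcase
        obtain ⟨r, hrR⟩ := hRne
        have hrS : r ∉ S := hcase r hrR
        have h1 := key S r hrR hrS
          (fun r' hr' => hcase r' (Finset.mem_of_mem_erase hr'))
        have h2 := ih (R.erase r) (Finset.erase_ssubset hrR)
          (fun r' hr' => hR r' (Finset.mem_of_mem_erase hr'))
        refine le_trans h1 (le_trans
          (mul_le_mul_of_nonneg_left h2 (rho_nonneg _)) (le_of_eq ?_))
        rw [← mul_assoc, ← Finset.mul_prod_erase _ _ hrR, if_neg hrS]

end Main

set_option maxHeartbeats 1000000 in
/-- **Inequality (3.4).** Let `p` be prime, `M` a uniformly random `n × n` symmetric `±1`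
matrix (entries reduced mod `p`), `v, w ∈ (ℤ/pℤ)ⁿ` and `T' ⊆ S ⊆ [n]`. Then
`P(M v = w) ≤ ρ(v_{T'})^{|S| - |T'|} ρ(v_S)^{n - |S|}`, where `ρ = rho 1` corresponds to
i.i.d. uniform `±1` coefficients. -/
theorem row_reveal_bound
    (p : ℕ) [Fact p.Prime] (n : ℕ) (v w : Fin n → ZMod p)
    (T' S : Finset (Fin n)) (hT'S : T' ⊆ S) :
    symPr n {A | (A.map (Int.cast : ℤ → ZMod p)).mulVec v = w} ≤
      rho 1 (fun i : T' => v i.1) ^ (S.card - T'.card) *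
        rho 1 (fun i : S => v i.1) ^ (n - S.card) := by
  classical
  rw [symPr_eq]
  rw [div_le_iff₀ (by positivity)]
  have hmono : (∑ g : Fin n × Fin n → Bool,
        ind (mat n g ∈ {A : Matrix (Fin n) (Fin n) ℤ |
          (A.map (Int.cast : ℤ → ZMod p)).mulVec v = w}))
      ≤ ∑ g : Fin n × Fin n → Bool,
          ind (∀ r ∈ T'ᶜ, Ev p n v w g r) := by
    refine Finset.sum_le_sum fun g _ => ?_
    refine ind_mono fun hg => ?_
    intro r _
    have := congrFun hg r
    unfold Ev
    simpa [Matrix.mulVec, dotProduct, Matrix.map_apply] using this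
  have hmain := main_count p n v w T' S T'ᶜ (fun r hr => Finset.mem_compl.1 hr)
  have hprod : (∏ r ∈ T'ᶜ, if r ∈ S then rho 1 (fun i : T' => v i.1)
        else rho 1 (fun i : S => v i.1))
      = rho 1 (fun i : T' => v i.1) ^ (S.card - T'.card) *
        rho 1 (fun i : S => v i.1) ^ (n - S.card) := by
    rw [Finset.prod_ite, Finset.prod_const, Finset.prod_const]
    have e1 : T'ᶜ.filter (· ∈ S) = S \ T' := by
      ext x
      simp [Finset.mem_sdiff, and_comm]
    have e2 : T'ᶜ.filter (fun x => ¬ x ∈ S) = Sᶜ := by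
      ext x
      simp only [Finset.mem_filter, Finset.mem_compl]
      constructor
      · exact fun h => h.2
      · exact fun h => ⟨fun hx => h (hT'S hx), h⟩
    rw [e1, e2, Finset.card_sdiff_of_subset hT'S, Finset.card_compl, Fintype.card_fin]
  rw [hprod] at hmain
  exact le_trans hmono hmain
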